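/- Assume (r1,r2,r3,r4,i,j,N) is admissible and r1 + r2 = r3 + r4. Then the shifted tuple (r1+N−2, r2+N−2, r3, r4, i, j+N−2, 2) is admissible, and F_2^N(r1, r2, i; r3, r4, j) = (−1)^N · [N−1]! · [N−2]! · Θ_2(N) · F_2^2(r1+N−2, r2+N−2, i; r3, r4, j+N−2), where Θ_2(N) = ∏_{m=1}^{N−2} ( [(r1+r2−i)/2 + m] · [(j+r2−r3)/2 + m] · [(j+r1−r4)/2 + m] · [(i+r3+r4)/2 + 1 + m] )^{−1/2}. (For N = 2 the empty product is 1 and the identity is trivial.) This expresses any type II multiplicity-free U_q(sl_N) 6-j symbol through a U_q(sl_2) 6-j symbol. -/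
import Mathlib


open Finset

/-- The quantum integer `[n] = (tⁿ − t⁻ⁿ)/(t − t⁻¹)`. -/
noncomputable def qint (t : ℝ) (n : ℤ) : ℝ := (t ^ n - t ^ (-n)) / (t - t⁻¹)

/-- The quantum factorial `[n]! = [1][2]⋯[n]`, with `[0]! = 1`
(and value `1` for negative arguments, which never occur below). -/
noncomputable def qfact (t : ℝ) (n : ℤ) : ℝ :=
  ∏ k ∈ Finset.range n.toNat, qint t ((k : ℤ) + 1)

/-- The q-Pochhammer symbol `(x; q)_n = ∏_{s=0}^{n−1} (1 − x qˢ)`. -/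
noncomputable def qpoch (x q : ℝ) (n : ℕ) : ℝ :=
  ∏ s ∈ Finset.range n, (1 - x * q ^ s)

/-- Admissibility of the tuple `(r₁,r₂,r₃,r₄,i,j,N)`. -/
def Admissible (r₁ r₂ r₃ r₄ i j N : ℤ) : Prop :=
  0 ≤ r₁ ∧ 0 ≤ r₂ ∧ 0 ≤ r₃ ∧ 0 ≤ r₄ ∧ 0 ≤ i ∧ 0 ≤ j ∧ 2 ≤ N ∧
  2 ∣ (r₁ + r₂ + i) ∧ 2 ∣ (r₃ + r₄ + i) ∧ 2 ∣ (r₁ + r₄ + j) ∧ 2 ∣ (r₂ + r₃ + j) ∧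
  max |r₁ - r₂| |r₃ - r₄| ≤ i ∧ i ≤ min (r₁ + r₂) (r₃ + r₄) ∧
  max |r₂ - r₃| |r₁ - r₄| ≤ j ∧ j ≤ min (r₂ + r₃) (r₁ + r₄)

/-- `ρ = (r₁+r₂+r₃+r₄)/2`. -/
def rho (r₁ r₂ r₃ r₄ : ℤ) : ℤ := (r₁ + r₂ + r₃ + r₄) / 2

/-- `m_max = (1/2)·min(r₁+r₂−i, r₃+r₄−i, r₁+r₄−j, r₂+r₃−j)`. -/
def mMax (r₁ r₂ r₃ r₄ i j : ℤ) : ℤ :=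
  (min (min (r₁ + r₂ - i) (r₃ + r₄ - i)) (min (r₁ + r₄ - j) (r₂ + r₃ - j))) / 2

/-- `m_min = (1/2)·max(0, r₁+r₃−i−j, r₂+r₄−i−j)`. -/
def mMin (r₁ r₂ r₃ r₄ i j : ℤ) : ℤ :=
  (max 0 (max (r₁ + r₃ - i - j) (r₂ + r₄ - i - j))) / 2

/-- `θ_N(a,b,c)`. -/
noncomputable def theta (t : ℝ) (N a b c : ℤ) : ℝ :=
  Real.sqrt (qfact t ((a + b - c) / 2) * qfact t ((a - b + c) / 2) *
    qfact t ((-a + b + c) / 2) / qfact t ((a + b + c) / 2 + N - 1))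

/-- `K′ = θ_N(r₁,r₂,i)·θ_N(r₃,r₄,i)·θ_N(r₁,r₄,j)·θ_N(r₂,r₃,j)·[N−1]!·[N−2]!`. -/
noncomputable def Kprime (t : ℝ) (N r₁ r₂ r₃ r₄ i j : ℤ) : ℝ :=
  theta t N r₁ r₂ i * theta t N r₃ r₄ i * theta t N r₁ r₄ j * theta t N r₂ r₃ j *
    qfact t (N - 1) * qfact t (N - 2)

/-- The multiplicity-free 6-j expression `F_T^N(r₁,r₂,i; r₃,r₄,j)` of type `T ∈ {1,2}`. -/
noncomputable def F (t : ℝ) (T : ℕ) (N r₁ r₂ i r₃ r₄ j : ℤ) : ℝ :=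
  Kprime t N r₁ r₂ r₃ r₄ i j *
    ∑ m ∈ Finset.Icc (mMin r₁ r₂ r₃ r₄ i j) (mMax r₁ r₂ r₃ r₄ i j),
      (-1 : ℝ) ^ (rho r₁ r₂ r₃ r₄ - m) * qfact t (rho r₁ r₂ r₃ r₄ + N - 1 - m) /
        (qfact t m * qfact t ((r₃ + r₄ - i) / 2 - m) * qfact t ((r₂ + r₃ - j) / 2 - m) *
          qfact t ((r₁ + r₄ - j) / 2 - m) * qfact t ((i + j - r₂ - r₄) / 2 + m) *
          qfact t ((r₁ + r₂ - i) / 2 + (N - 2) * (if T = 2 then 1 else 0) - m) *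
          qfact t ((i + j - r₁ - r₃) / 2 + (N - 2) * (if T = 1 then 1 else 0) + m))

/-- The prefactor `K_T` (for the case `m_min = 0`). -/
noncomputable def Kfac (t : ℝ) (T : ℕ) (N r₁ r₂ i r₃ r₄ j : ℤ) : ℝ :=
  Kprime t N r₁ r₂ r₃ r₄ i j * qfact t (rho r₁ r₂ r₃ r₄ + N - 1) /
    (qfact t ((r₃ + r₄ - i) / 2) *
      qfact t ((r₁ + r₂ - i) / 2 + (N - 2) * (if T = 2 then 1 else 0)) *
      qfact t ((r₂ + r₃ - j) / 2) * qfact t ((r₁ + r₄ - j) / 2) *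
      qfact t ((i + j - r₂ - r₄) / 2) *
      qfact t ((i + j - r₁ - r₃) / 2 + (N - 2) * (if T = 1 then 1 else 0)))

section PfHelpers
lemma tsub_ne {t : ℝ} (ht : 0 < t) (ht1 : t ≠ 1) : t - t⁻¹ ≠ 0 := by
  intro h
  have h2 : t = t⁻¹ := sub_eq_zero.mp h
  have h3 : t * t = 1 := by
    nth_rewrite 2 [h2]; exact mul_inv_cancel₀ ht.ne'
  rcases mul_self_eq_one_iff.mp h3 with h | h
  · exact ht1 h
  · linarith

lemma qint_one {t : ℝ} (ht : 0 < t) (ht1 : t ≠ 1) : qint t 1 = 1 := by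
  rw [qint, zpow_one, zpow_neg, zpow_one, div_self (tsub_ne ht ht1)]

lemma qint_inv {t : ℝ} (ht : t ≠ 0) (n : ℤ) : qint t⁻¹ n = qint t n := by
  rw [qint, qint, inv_inv, inv_zpow', inv_zpow', neg_neg,
    show t ^ (-n) - t ^ n = -(t ^ n - t ^ (-n)) by ring,
    show t⁻¹ - t = -(t - t⁻¹) by ring, neg_div_neg_eq]

lemma qint_pos_of_one_lt {t : ℝ} (ht : 1 < t) {n : ℤ} (hn : 1 ≤ n) : 0 < qint t n := by
  have h0 : (0:ℝ) < t := by linarith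
  apply div_pos
  · have : t ^ (-n) < t ^ n := zpow_lt_zpow_right₀ ht (by omega)
    linarith
  · have : t⁻¹ < 1 := inv_lt_one_of_one_lt₀ ht
    linarith

lemma qint_pos {t : ℝ} (ht : 0 < t) (ht1 : t ≠ 1) {n : ℤ} (hn : 1 ≤ n) : 0 < qint t n := by
  rcases lt_or_gt_of_ne ht1 with h | h
  · rw [← qint_inv ht.ne']
    exact qint_pos_of_one_lt (one_lt_inv₀ ht |>.mpr h) hn
  · exact qint_pos_of_one_lt h hn

lemma qfact_pos {t : ℝ} (ht : 0 < t) (ht1 : t ≠ 1) (n : ℤ) : 0 < qfact t n :=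
  Finset.prod_pos fun k _ => qint_pos ht ht1 (by omega)

lemma qfact_zero (t : ℝ) : qfact t 0 = 1 := by simp [qfact]
lemma qfact_one {t : ℝ} (ht : 0 < t) (ht1 : t ≠ 1) : qfact t 1 = 1 := by
  simp [qfact, qint_one ht ht1]

lemma prod_Icc_eq_range (K : ℤ) (f : ℤ → ℝ) :
    ∏ m ∈ Icc (1:ℤ) K, f m = ∏ s ∈ Finset.range K.toNat, f ((s:ℤ)+1) := by
  refine Finset.prod_bij' (fun m _ => (m-1).toNat) (fun s _ => (s:ℤ)+1) ?_ ?_ ?_ ?_ ?_ <;>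
    simp only [Finset.mem_Icc, Finset.mem_range] <;> intros <;> try omega
  · congr 1; omega

lemma qfact_add {t : ℝ} (a K : ℤ) (ha : 0 ≤ a) (hK : 0 ≤ K) :
    qfact t (a + K) = qfact t a * ∏ m ∈ Icc (1:ℤ) K, qint t (a + m) := by
  rw [qfact, qfact, Int.toNat_add ha hK, Finset.prod_range_add, prod_Icc_eq_range]
  congr 1
  apply Finset.prod_congr rfl
  intro s _
  congr 1
  omega

lemma sqrt_prod {ι : Type*} (s : Finset ι) (f : ι → ℝ) (h : ∀ x ∈ s, 0 ≤ f x) :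
    Real.sqrt (∏ x ∈ s, f x) = ∏ x ∈ s, Real.sqrt (f x) := by
  classical
  induction s using Finset.cons_induction with
  | empty => simp
  | cons a s ha ih =>
    rw [Finset.prod_cons, Finset.prod_cons, Real.sqrt_mul (h a (Finset.mem_cons_self a s)),
      ih fun x hx => h x (Finset.mem_cons_of_mem hx)]

variable {t : ℝ}

lemma theta_L1 (ht : 0 < t) (ht1 : t ≠ 1) (N a b c : ℤ) (hN : 2 ≤ N)
    (hd : 2 ∣ (a + b + c)) (hc : c ≤ a + b) :
    theta t N a b c = theta t 2 (a + (N-2)) (b + (N-2)) c *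
      (∏ m ∈ Icc (1:ℤ) (N-2), Real.sqrt (qint t ((a + b - c) / 2 + m)))⁻¹ := by
  rw [theta, theta,
    show (a+(N-2)+(b+(N-2))-c)/2 = (a+b-c)/2 + (N-2) by omega,
    show (a+(N-2)-(b+(N-2))+c)/2 = (a-b+c)/2 by omega,
    show (-(a+(N-2))+(b+(N-2))+c)/2 = (-a+b+c)/2 by omega,
    show (a+(N-2)+(b+(N-2))+c)/2 + 2 - 1 = (a+b+c)/2 + N - 1 by omega,
    qfact_add _ _ (by omega) (by omega)]
  set S := ∏ m ∈ Icc (1:ℤ) (N-2), qint t ((a+b-c)/2 + m) with hSdef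
  have hS : 0 < S := Finset.prod_pos fun m hm => qint_pos ht ht1
    (by rw [Finset.mem_Icc] at hm; omega)
  rw [show ∏ m ∈ Icc (1:ℤ) (N-2), Real.sqrt (qint t ((a + b - c) / 2 + m)) = Real.sqrt S from
    (sqrt_prod _ _ fun m hm => (qint_pos ht ht1 (by rw [Finset.mem_Icc] at hm; omega)).le).symm]
  have hP : (0:ℝ) ≤ qfact t ((a+b-c)/2) * qfact t ((a-b+c)/2) * qfact t ((-a+b+c)/2) /
      qfact t ((a+b+c)/2 + N - 1) :=
    le_of_lt (div_pos (mul_pos (mul_pos (qfact_pos ht ht1 _) (qfact_pos ht ht1 _))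
      (qfact_pos ht ht1 _)) (qfact_pos ht ht1 _))
  rw [show qfact t ((a+b-c)/2) * S * qfact t ((a-b+c)/2) * qfact t ((-a+b+c)/2) /
      qfact t ((a+b+c)/2 + N - 1) =
      (qfact t ((a+b-c)/2) * qfact t ((a-b+c)/2) * qfact t ((-a+b+c)/2) /
      qfact t ((a+b+c)/2 + N - 1)) * S by ring,
    Real.sqrt_mul hP, mul_inv_cancel_right₀ (Real.sqrt_pos.mpr hS).ne']

lemma theta_L2 (ht : 0 < t) (ht1 : t ≠ 1) (N a b c : ℤ) (hN : 2 ≤ N)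
    (hd : 2 ∣ (a + b + c)) (hb : b ≤ a + c) :
    theta t N a b c = theta t 2 (a + (N-2)) b (c + (N-2)) *
      (∏ m ∈ Icc (1:ℤ) (N-2), Real.sqrt (qint t ((a - b + c) / 2 + m)))⁻¹ := by
  rw [theta, theta,
    show (a+(N-2)+b-(c+(N-2)))/2 = (a+b-c)/2 by omega,
    show (a+(N-2)-b+(c+(N-2)))/2 = (a-b+c)/2 + (N-2) by omega,
    show (-(a+(N-2))+b+(c+(N-2)))/2 = (-a+b+c)/2 by omega,
    show (a+(N-2)+b+(c+(N-2)))/2 + 2 - 1 = (a+b+c)/2 + N - 1 by omega,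
    qfact_add _ _ (by omega) (by omega)]
  set S := ∏ m ∈ Icc (1:ℤ) (N-2), qint t ((a-b+c)/2 + m) with hSdef
  have hS : 0 < S := Finset.prod_pos fun m hm => qint_pos ht ht1
    (by rw [Finset.mem_Icc] at hm; omega)
  rw [show ∏ m ∈ Icc (1:ℤ) (N-2), Real.sqrt (qint t ((a - b + c) / 2 + m)) = Real.sqrt S from
    (sqrt_prod _ _ fun m hm => (qint_pos ht ht1 (by rw [Finset.mem_Icc] at hm; omega)).le).symm]
  have hP : (0:ℝ) ≤ qfact t ((a+b-c)/2) * qfact t ((a-b+c)/2) * qfact t ((-a+b+c)/2) /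
      qfact t ((a+b+c)/2 + N - 1) :=
    le_of_lt (div_pos (mul_pos (mul_pos (qfact_pos ht ht1 _) (qfact_pos ht ht1 _))
      (qfact_pos ht ht1 _)) (qfact_pos ht ht1 _))
  rw [show qfact t ((a+b-c)/2) * (qfact t ((a-b+c)/2) * S) * qfact t ((-a+b+c)/2) /
      qfact t ((a+b+c)/2 + N - 1) =
      (qfact t ((a+b-c)/2) * qfact t ((a-b+c)/2) * qfact t ((-a+b+c)/2) /
      qfact t ((a+b+c)/2 + N - 1)) * S by ring,
    Real.sqrt_mul hP, mul_inv_cancel_right₀ (Real.sqrt_pos.mpr hS).ne']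

lemma theta_L3 (ht : 0 < t) (ht1 : t ≠ 1) (N a b c : ℤ) (hN : 2 ≤ N)
    (ha : 0 ≤ a + b + c) :
    theta t N a b c = theta t 2 a b c *
      (∏ m ∈ Icc (1:ℤ) (N-2), Real.sqrt (qint t ((a + b + c) / 2 + 1 + m)))⁻¹ := by
  rw [theta, theta,
    show (a+b+c)/2 + N - 1 = ((a+b+c)/2 + 1) + (N-2) by omega,
    show (a+b+c)/2 + 2 - 1 = (a+b+c)/2 + 1 by omega,
    qfact_add _ _ (by omega) (by omega)]
  set S := ∏ m ∈ Icc (1:ℤ) (N-2), qint t ((a+b+c)/2 + 1 + m) with hSdef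
  have hS : 0 < S := Finset.prod_pos fun m hm => qint_pos ht ht1
    (by rw [Finset.mem_Icc] at hm; omega)
  rw [show ∏ m ∈ Icc (1:ℤ) (N-2), Real.sqrt (qint t ((a + b + c) / 2 + 1 + m)) = Real.sqrt S from
    (sqrt_prod _ _ fun m hm => (qint_pos ht ht1 (by rw [Finset.mem_Icc] at hm; omega)).le).symm]
  have hP : (0:ℝ) ≤ qfact t ((a+b-c)/2) * qfact t ((a-b+c)/2) * qfact t ((-a+b+c)/2) /
      qfact t ((a+b+c)/2 + 1) :=
    le_of_lt (div_pos (mul_pos (mul_pos (qfact_pos ht ht1 _) (qfact_pos ht ht1 _))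
      (qfact_pos ht ht1 _)) (qfact_pos ht ht1 _))
  rw [show qfact t ((a+b-c)/2) * qfact t ((a-b+c)/2) * qfact t ((-a+b+c)/2) /
      (qfact t ((a+b+c)/2 + 1) * S) =
      (qfact t ((a+b-c)/2) * qfact t ((a-b+c)/2) * qfact t ((-a+b+c)/2) /
      qfact t ((a+b+c)/2 + 1)) / S by ring,
    Real.sqrt_div hP, div_eq_mul_inv]

end PfHelpers

/-- any type II multiplicity-free `U_q(sl_N)` 6-j symbol reduces to a
`U_q(sl_2)` one: the shifted tuple is admissible and
`F_2^N(r₁,r₂,i;r₃,r₄,j) = (−1)^N [N−1]! [N−2]! Θ₂(N) F_2^2(r₁+N−2, r₂+N−2, i; r₃, r₄, j+N−2)`. -/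
theorem stmt8 (t : ℝ) (ht : 0 < t) (ht1 : t ≠ 1) (r₁ r₂ r₃ r₄ i j N : ℤ)
    (hadm : Admissible r₁ r₂ r₃ r₄ i j N) (hfus : r₁ + r₂ = r₃ + r₄) :
    Admissible (r₁ + N - 2) (r₂ + N - 2) r₃ r₄ i (j + N - 2) 2 ∧
    F t 2 N r₁ r₂ i r₃ r₄ j =
      (-1 : ℝ) ^ N * qfact t (N - 1) * qfact t (N - 2) *
        (∏ m ∈ Finset.Icc (1 : ℤ) (N - 2),
          (Real.sqrt (qint t ((r₁ + r₂ - i) / 2 + m) * qint t ((j + r₂ - r₃) / 2 + m) *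
            qint t ((j + r₁ - r₄) / 2 + m) * qint t ((i + r₃ + r₄) / 2 + 1 + m)))⁻¹) *
        F t 2 2 (r₁ + N - 2) (r₂ + N - 2) i r₃ r₄ (j + N - 2) := by
  obtain ⟨h1, h2, h3, h4, h5, h6, hN, hd1, hd2, hd3, hd4, htr1, htr2, htr3, htr4⟩ := hadm
  simp only [max_le_iff, le_min_iff, abs_le] at htr1 htr2 htr3 htr4
  constructor
  · refine ⟨by omega, by omega, by omega, by omega, by omega, by omega, le_refl 2,
      by omega, by omega, by omega, by omega, ?_, ?_, ?_, ?_⟩ <;>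
    simp only [max_le_iff, le_min_iff, abs_le] <;> omega
  · rw [F, F]
    simp only [reduceIte, show ((2:ℕ) = 1) = False from by norm_num, if_false, mul_one,
      mul_zero, add_zero, show (2:ℤ)-2 = 0 from rfl, zero_mul]
    rw [show rho (r₁+N-2) (r₂+N-2) r₃ r₄ = rho r₁ r₂ r₃ r₄ + (N-2) from by unfold rho; omega,
      show mMin (r₁+N-2) (r₂+N-2) r₃ r₄ i (j+N-2) = mMin r₁ r₂ r₃ r₄ i j from by
        unfold mMin; omega,
      show mMax (r₁+N-2) (r₂+N-2) r₃ r₄ i (j+N-2) = mMax r₁ r₂ r₃ r₄ i j from by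
        unfold mMax; omega,
      show (r₂+N-2+r₃-(j+N-2))/2 = (r₂+r₃-j)/2 from by omega,
      show (r₁+N-2+r₄-(j+N-2))/2 = (r₁+r₄-j)/2 from by omega,
      show (i+(j+N-2)-(r₂+N-2)-r₄)/2 = (i+j-r₂-r₄)/2 from by omega,
      show (r₁+N-2+(r₂+N-2)-i)/2 = (r₁+r₂-i)/2 + (N-2) from by omega,
      show (i+(j+N-2)-(r₁+N-2)-r₃)/2 = (i+j-r₁-r₃)/2 from by omega,
      show (i+r₃+r₄)/2 = (r₃+r₄+i)/2 from by omega,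
      show (j+r₂-r₃)/2 = (r₂-r₃+j)/2 from by omega,
      show (j+r₁-r₄)/2 = (r₁-r₄+j)/2 from by omega]
    simp only [show ∀ m : ℤ, rho r₁ r₂ r₃ r₄ + (N-2) + 2 - 1 - m = rho r₁ r₂ r₃ r₄ + N - 1 - m
        from fun m => by omega,
      show ∀ m : ℤ, rho r₁ r₂ r₃ r₄ + (N-2) - m = (N-2) + (rho r₁ r₂ r₃ r₄ - m)
        from fun m => by omega,
      zpow_add₀ (show (-1:ℝ) ≠ 0 from by norm_num), mul_assoc, mul_div_assoc]
    rw [← Finset.mul_sum]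
    set S := ∑ x ∈ Finset.Icc (mMin r₁ r₂ r₃ r₄ i j) (mMax r₁ r₂ r₃ r₄ i j),
        (-1:ℝ) ^ (rho r₁ r₂ r₃ r₄ - x) *
          (qfact t (rho r₁ r₂ r₃ r₄ + N - 1 - x) /
            (qfact t x *
              (qfact t ((r₃ + r₄ - i) / 2 - x) *
                (qfact t ((r₂ + r₃ - j) / 2 - x) *
                  (qfact t ((r₁ + r₄ - j) / 2 - x) *
                    (qfact t ((i + j - r₂ - r₄) / 2 + x) *
                      (qfact t ((r₁ + r₂ - i) / 2 + (N - 2) - x) *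
                        qfact t ((i + j - r₁ - r₃) / 2 + x)))))))) with hSdef
    set Th := ∏ x ∈ Finset.Icc (1:ℤ) (N - 2),
        (Real.sqrt (qint t ((r₁ + r₂ - i) / 2 + x) *
          (qint t ((r₂ - r₃ + j) / 2 + x) *
            (qint t ((r₁ - r₄ + j) / 2 + x) *
              qint t ((r₃ + r₄ + i) / 2 + 1 + x)))))⁻¹ with hThdef
    set f1 := qfact t (N - 1) with hf1
    set f2 := qfact t (N - 2) with hf2
    set K2 := Kprime t 2 (r₁ + N - 2) (r₂ + N - 2) r₃ r₄ i (j + N - 2) with hK2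
    have hq1 : ∀ x ∈ Finset.Icc (1:ℤ) (N-2), 0 < qint t ((r₁ + r₂ - i) / 2 + x) := fun x hx =>
      qint_pos ht ht1 (by rw [Finset.mem_Icc] at hx; omega)
    have hq2 : ∀ x ∈ Finset.Icc (1:ℤ) (N-2), 0 < qint t ((r₂ - r₃ + j) / 2 + x) := fun x hx =>
      qint_pos ht ht1 (by rw [Finset.mem_Icc] at hx; omega)
    have hq3 : ∀ x ∈ Finset.Icc (1:ℤ) (N-2), 0 < qint t ((r₁ - r₄ + j) / 2 + x) := fun x hx =>
      qint_pos ht ht1 (by rw [Finset.mem_Icc] at hx; omega)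
    have hq4 : ∀ x ∈ Finset.Icc (1:ℤ) (N-2), 0 < qint t ((r₃ + r₄ + i) / 2 + 1 + x) := fun x hx =>
      qint_pos ht ht1 (by rw [Finset.mem_Icc] at hx; omega)
    have hTh : Th = (∏ x ∈ Finset.Icc (1:ℤ) (N-2), Real.sqrt (qint t ((r₁ + r₂ - i) / 2 + x)))⁻¹ *
        ((∏ x ∈ Finset.Icc (1:ℤ) (N-2), Real.sqrt (qint t ((r₂ - r₃ + j) / 2 + x)))⁻¹ *
          ((∏ x ∈ Finset.Icc (1:ℤ) (N-2), Real.sqrt (qint t ((r₁ - r₄ + j) / 2 + x)))⁻¹ *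
            (∏ x ∈ Finset.Icc (1:ℤ) (N-2), Real.sqrt (qint t ((r₃ + r₄ + i) / 2 + 1 + x)))⁻¹)) := by
      rw [hThdef,
        Finset.prod_congr rfl (fun x hx => by
          rw [Real.sqrt_mul (hq1 x hx).le, Real.sqrt_mul (hq2 x hx).le,
            Real.sqrt_mul (hq3 x hx).le, mul_inv, mul_inv, mul_inv]),
        Finset.prod_mul_distrib, Finset.prod_mul_distrib, Finset.prod_mul_distrib,
        Finset.prod_inv_distrib, Finset.prod_inv_distrib, Finset.prod_inv_distrib,
        Finset.prod_inv_distrib]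
    have hK : Kprime t N r₁ r₂ r₃ r₄ i j = f1 * f2 * Th * K2 := by
      rw [hK2, Kprime, Kprime,
        theta_L1 ht ht1 N r₁ r₂ i hN hd1 htr2.1,
        theta_L3 ht ht1 N r₃ r₄ i hN (by omega),
        theta_L2 ht ht1 N r₁ r₄ j hN (by omega) (by omega),
        theta_L2 ht ht1 N r₂ r₃ j hN (by omega) (by omega),
        show r₁ + (N-2) = r₁ + N - 2 from by ring,
        show r₂ + (N-2) = r₂ + N - 2 from by ring,
        show j + (N-2) = j + N - 2 from by ring,
        show (2:ℤ) - 1 = 1 from rfl, show (2:ℤ) - 2 = 0 from rfl,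
        qfact_one ht ht1, qfact_zero, hTh, hf1, hf2]
      ring
    have hsign : (1:ℝ) = (-1:ℝ) ^ N * (-1:ℝ) ^ (N - 2) := by
      rw [← zpow_add₀ (show (-1:ℝ) ≠ 0 from by norm_num)]
      exact (Even.neg_one_zpow ⟨N - 1, by ring⟩).symm
    rw [hK]
    linear_combination (f1 * f2 * Th * K2 * S) * hsign
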